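/- arXiv:2005.05364 — 4 statements merged into one kernel-verified Lean document; each statement's English description precedes it below -/
import Mathlib

section
/- For every n ≥ 1 and every vector c ∈ [0,1)^n, the matrix B(c) := diag(1−c_1,...,1−c_n) + c·1ᵀ is invertible and satisfies 1ᵀ·B(c)^{-1}·c = (Σ_{i=1}^n c_i/(1−c_i)) / (1 + Σ_{i=1}^n c_i/(1−c_i)); in particular 0 ≤ 1ᵀ·B(c)^{-1}·c < 1. -/
noncomputable section

open Matrix

/-- The matrix `B(c) = diag(1−c₁,...,1−cₙ) + c·1ᵀ`, i.e. `B(c)ᵢⱼ = (1−cᵢ)δᵢⱼ + cᵢ`. -/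
def Bmat (n : ℕ) (c : Fin n → ℝ) : Matrix (Fin n) (Fin n) ℝ :=
  Matrix.of fun i j => (if i = j then 1 - c i else 0) + c i

private lemma aux_split (a b t x : ℝ) (ha : a ≠ 0) (hb : b ≠ 0) (ht : t ≠ 0) :
    x / (a * b * t) = (x / a) * (b⁻¹ * t⁻¹) := by
  field_simp

private lemma aux_colsum (b S : ℝ) (hb : b ≠ 0) (hS : 1 + S ≠ 0) :
    b⁻¹ - S * (b⁻¹ * (1 + S)⁻¹) = b⁻¹ * (1 + S)⁻¹ := by
  field_simp
  ring

private lemma aux_diag (a t x : ℝ) (ha : a ≠ 0) (ht : t ≠ 0) :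
    a * (a⁻¹ - x / (a * a * t)) + x * (a⁻¹ * t⁻¹) = 1 := by
  field_simp
  ring

private lemma aux_off (a b t x : ℝ) (ha : a ≠ 0) (hb : b ≠ 0) (ht : t ≠ 0) :
    a * (0 - x / (a * b * t)) + x * (b⁻¹ * t⁻¹) = 0 := by
  field_simp
  ring

private lemma aux_frac (a b t x y : ℝ) (ha : a ≠ 0) (hb : b ≠ 0) (ht : t ≠ 0) :
    x / (a * b * t) * y = (x / a / t) * (y / b) := by
  field_simp

private lemma aux_row (a S x : ℝ) (ha : a ≠ 0) (hS : 1 + S ≠ 0) :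
    a⁻¹ * x - (x / a / (1 + S)) * S = x / a / (1 + S) := by
  field_simp
  ring

/-- for `c ∈ [0,1)ⁿ`, `B(c)` is invertible and
`1ᵀ·B(c)⁻¹·c = (∑ cᵢ/(1−cᵢ)) / (1 + ∑ cᵢ/(1−cᵢ)) ∈ [0,1)`. -/
theorem Bmat_inv_quadratic_form
    (n : ℕ) (hn : 1 ≤ n) (c : Fin n → ℝ) (hc : ∀ i, c i ∈ Set.Ico (0 : ℝ) 1) :
    IsUnit (Bmat n c) ∧
    (∑ i, ((Bmat n c)⁻¹ *ᵥ c) i)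
      = (∑ i, c i / (1 - c i)) / (1 + ∑ i, c i / (1 - c i)) ∧
    0 ≤ ∑ i, ((Bmat n c)⁻¹ *ᵥ c) i ∧
    (∑ i, ((Bmat n c)⁻¹ *ᵥ c) i) < 1 := by
  have h1 : ∀ i, 0 < 1 - c i := fun i => by have := (hc i).2; linarith
  have h1' : ∀ i, (1 - c i) ≠ 0 := fun i => (h1 i).ne'
  set S := ∑ i, c i / (1 - c i) with hSdef
  have hS : 0 ≤ S := Finset.sum_nonneg fun i _ => div_nonneg (hc i).1 (h1 i).le
  have h1S : (0:ℝ) < 1 + S := by linarith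
  have h1S' : (1 + S) ≠ 0 := h1S.ne'
  set M : Matrix (Fin n) (Fin n) ℝ :=
    Matrix.of (fun i j => (if i = j then (1 - c i)⁻¹ else 0)
      - c i / ((1 - c i) * (1 - c j) * (1 + S))) with hM
  -- column sums of M
  have colsum : ∀ k, (∑ j, M j k) = (1 - c k)⁻¹ * (1 + S)⁻¹ := by
    intro k
    have step : ∀ j, M j k = (if j = k then (1 - c j)⁻¹ else 0)
        - (c j / (1 - c j)) * ((1 - c k)⁻¹ * (1 + S)⁻¹) := by
      intro j
      simp only [hM, Matrix.of_apply]
      rw [aux_split _ _ _ _ (h1' j) (h1' k) h1S']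
    rw [Finset.sum_congr rfl fun j _ => step j, Finset.sum_sub_distrib,
      Finset.sum_ite_eq', ← Finset.sum_mul, ← hSdef]
    simp only [Finset.mem_univ, if_true]
    exact aux_colsum _ _ (h1' k) h1S'
  have hBM : Bmat n c * M = 1 := by
    ext i k
    rw [Matrix.mul_apply]
    have step : ∀ j, Bmat n c i j * M j k
        = (if j = i then (1 - c i) * M j k else 0) + c i * M j k := by
      intro j
      by_cases h : j = i
      · subst h
        simp only [Bmat, Matrix.of_apply, eq_self_iff_true, if_true]
        ring
      · simp only [Bmat, Matrix.of_apply, if_neg h,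
          if_neg (fun hh : i = j => h hh.symm), zero_add, zero_mul]
    rw [Finset.sum_congr rfl fun j _ => step j, Finset.sum_add_distrib,
      Finset.sum_ite_eq', ← Finset.mul_sum, colsum k]
    simp only [Finset.mem_univ, if_true, hM, Matrix.of_apply, Matrix.one_apply]
    by_cases hik : i = k
    · subst hik
      simp only [if_pos rfl]
      exact aux_diag _ _ _ (h1' i) h1S'
    · simp only [if_neg hik]
      exact aux_off _ _ _ _ (h1' i) (h1' k) h1S'
  have hinv : Invertible (Bmat n c) := invertibleOfRightInverse _ _ hBM
  have hIsUnit : IsUnit (Bmat n c) := isUnit_of_invertible _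
  have hBinv : (Bmat n c)⁻¹ = M := Matrix.inv_eq_right_inv hBM
  have hrow : ∀ i, (M *ᵥ c) i = c i / (1 - c i) / (1 + S) := by
    intro i
    rw [Matrix.mulVec, dotProduct]
    have key : ∀ j, M i j * c j
        = (if i = j then (1 - c i)⁻¹ * c j else 0)
          - (c i / (1 - c i) / (1 + S)) * (c j / (1 - c j)) := by
      intro j
      simp only [hM, Matrix.of_apply]
      rw [sub_mul, ite_mul, zero_mul, aux_frac _ _ _ _ _ (h1' i) (h1' j) h1S']
    rw [Finset.sum_congr rfl fun j _ => key j, Finset.sum_sub_distrib,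
      Finset.sum_ite_eq, ← Finset.mul_sum, ← hSdef]
    simp only [Finset.mem_univ, if_true]
    exact aux_row _ _ _ (h1' i) h1S'
  have hsum : (∑ i, ((Bmat n c)⁻¹ *ᵥ c) i) = S / (1 + S) := by
    rw [hBinv, Finset.sum_congr rfl fun i _ => hrow i, ← Finset.sum_div, ← hSdef]
  refine ⟨hIsUnit, by rw [hsum], ?_, ?_⟩
  · rw [hsum]; positivity
  · rw [hsum]; rw [div_lt_one h1S]; linarith
end
end

section
/- In the symmetric VWAP setting, for any fixed prices (q, q̄) with 0 ≤ q < q̄ ≤ 1 and h < a·q̄, the unique Nash equilibrium of problem (P2) (with all banks facing the same price q̄) is symmetric, s_i = s^VWAP(q,q̄) for all i, where s^VWAP(q,q̄) = max( (h − a q)/(q̄ − q) , min( 2r/(α(1+r)(n+1)) , h/q̄ ) ). -/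
noncomputable section

/-- The domain `D = ∏ [0, aᵢ]` of admissible liquidation vectors. -/
def memD (n : ℕ) (a s : Fin n → ℝ) : Prop := ∀ i, s i ∈ Set.Icc 0 (a i)

/-- Bank `i`'s cost: realized loss from sales plus interest on the borrowed amount. -/
def obj (n : ℕ) (r : ℝ) (h : Fin n → ℝ) (fbar : Fin n → (Fin n → ℝ) → ℝ)
    (i : Fin n) (s : Fin n → ℝ) : ℝ :=
  s i * (1 - fbar i s) + r * (h i - s i * fbar i s)

/-- Feasibility in problem (P2) with fixed prices `(q, q̄)`. -/
def feasP2 (n : ℕ) (a h : Fin n → ℝ) (q : ℝ) (qb : Fin n → ℝ) (i : Fin n) (x : ℝ) : Prop :=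
  x ∈ Set.Icc 0 (a i) ∧ x ≤ h i / qb i ∧ (h i - a i * q) / (qb i - q) ≤ x

/-- `s` is a Nash equilibrium of problem (P2) at fixed prices `(q, q̄)`. -/
def NashP2 (n : ℕ) (a h : Fin n → ℝ) (r q : ℝ) (qb : Fin n → ℝ)
    (fbar : Fin n → (Fin n → ℝ) → ℝ) (s : Fin n → ℝ) : Prop :=
  ∀ i : Fin n,
    (h i ≤ a i * qb i →
      feasP2 n a h q qb i (s i) ∧
      ∀ x : ℝ, feasP2 n a h q qb i x →
        obj n r h fbar i s ≤ obj n r h fbar i (Function.update s i x)) ∧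
    (a i * qb i < h i → s i = a i)


/-- The clamp `max L (min (-b/(2c)) U)` minimizes `c x² + b x` on `[L,U]`. -/
lemma quad_min_at_clamp (c b L U : ℝ) (hc : 0 < c) (hLU : L ≤ U) :
    max L (min (-b/(2*c)) U) ∈ Set.Icc L U ∧
    ∀ x ∈ Set.Icc L U,
      c*(max L (min (-b/(2*c)) U))^2 + b*(max L (min (-b/(2*c)) U)) ≤ c*x^2 + b*x := by
  constructor
  · exact ⟨le_max_left _ _, max_le hLU (min_le_right _ _)⟩
  · intro x hx
    obtain ⟨hx1, hx2⟩ := hx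
    rcases le_or_gt (-b/(2*c)) L with hzL | hzL
    · rw [min_eq_left (le_trans hzL hLU), max_eq_left hzL]
      have hb : -b ≤ L*(2*c) := (div_le_iff₀ (by linarith)).1 hzL
      nlinarith [mul_nonneg (sub_nonneg.2 hx1) (by linarith : (0:ℝ) ≤ 2*c*L + b),
        mul_nonneg hc.le (sq_nonneg (x - L))]
    · rcases le_or_gt U (-b/(2*c)) with hzU | hzU
      · rw [min_eq_right hzU, max_eq_right hLU]
        have hb : U*(2*c) ≤ -b := (le_div_iff₀ (by linarith)).1 hzU
        nlinarith [mul_nonneg (sub_nonneg.2 hx2) (by linarith : (0:ℝ) ≤ -(2*c*U + b)),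
          mul_nonneg hc.le (sq_nonneg (x - U))]
      · rw [min_eq_left hzU.le, max_eq_right hzL.le]
        have hb : b = -2*c*(-b/(2*c)) := by field_simp
        nlinarith [mul_nonneg hc.le (sq_nonneg (x - (-b/(2*c))))]

/-- Any minimizer of `c x² + b x` on `[L,U]` equals the clamp. -/
lemma quad_argmin (c b L U y : ℝ) (hc : 0 < c) (hLU : L ≤ U) (hyI : y ∈ Set.Icc L U)
    (hmin : ∀ x ∈ Set.Icc L U, c*y^2 + b*y ≤ c*x^2 + b*x) :
    y = max L (min (-b/(2*c)) U) := by
  obtain ⟨hzI, hzmin⟩ := quad_min_at_clamp c b L U hc hLU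
  set z := max L (min (-b/(2*c)) U) with hz
  have heq : c*y^2 + b*y = c*z^2 + b*z := le_antisymm (hmin z hzI) (hzmin y hyI)
  obtain ⟨hy1, hy2⟩ := hyI
  rcases le_or_gt (-b/(2*c)) L with hzL | hzL
  · have hzeq : z = L := by rw [hz, min_eq_left (le_trans hzL hLU), max_eq_left hzL]
    rw [hzeq] at heq
    have hb : -b ≤ L*(2*c) := (div_le_iff₀ (by linarith)).1 hzL
    rw [hzeq]
    by_contra hne
    have hgt : L < y := lt_of_le_of_ne hy1 (Ne.symm hne)
    nlinarith [mul_pos hc (sub_pos.2 hgt), mul_pos (mul_pos hc (sub_pos.2 hgt)) (sub_pos.2 hgt),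
      mul_nonneg (sub_pos.2 hgt).le (by linarith : (0:ℝ) ≤ 2*c*L + b)]
  · rcases le_or_gt U (-b/(2*c)) with hzU | hzU
    · have hzeq : z = U := by rw [hz, min_eq_right hzU, max_eq_right hLU]
      rw [hzeq] at heq
      have hb : U*(2*c) ≤ -b := (le_div_iff₀ (by linarith)).1 hzU
      rw [hzeq]
      by_contra hne
      have hgt : y < U := lt_of_le_of_ne hy2 hne
      nlinarith [mul_pos (mul_pos hc (sub_pos.2 hgt)) (sub_pos.2 hgt),
        mul_nonneg (sub_pos.2 hgt).le (by linarith : (0:ℝ) ≤ -(2*c*U + b))]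
    · have hzeq : z = -b/(2*c) := by rw [hz, min_eq_left hzU.le, max_eq_right hzL.le]
      have hb : b = -2*c*z := by rw [hzeq]; field_simp
      have h0 : c*(y - z)^2 = 0 := by rw [hb] at heq; nlinarith [heq]
      have : (y - z)^2 = 0 := by
        rcases mul_eq_zero.1 h0 with h | h
        · exact absurd h hc.ne'
        · exact h
      have := pow_eq_zero_iff (n := 2) (by norm_num) |>.1 this
      linarith [sub_eq_zero.1 this]

/-- monotone & 1-Lipschitz property of the clamp. -/
lemma clamp_mono_lip (L U u v : ℝ) (huv : u ≤ v) :
    max L (min u U) ≤ max L (min v U) ∧ max L (min v U) ≤ max L (min u U) + (v - u) := by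
  constructor
  · exact max_le_max le_rfl (min_le_min huv le_rfl)
  · simp only [max_def, min_def]; split_ifs <;> linarith

lemma fp_half (L U e y y' : ℝ) (hy : y = max L (min (e + y/2) U))
    (hy' : y' = max L (min (e + y'/2) U)) : y = y' := by
  rcases le_total y y' with hle | hle
  · have h1 := (clamp_mono_lip L U (e + y/2) (e + y'/2) (by linarith)).2
    rw [← hy, ← hy'] at h1
    linarith
  · have h1 := (clamp_mono_lip L U (e + y'/2) (e + y/2) (by linarith)).2
    rw [← hy, ← hy'] at h1
    linarith

lemma fp_dec (L U e k y y' : ℝ) (hk : 0 ≤ k) (hy : y = max L (min (e - k*y) U))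
    (hy' : y' = max L (min (e - k*y') U)) : y = y' := by
  rcases lt_trichotomy y y' with hlt | heq | hlt
  · have h1 := (clamp_mono_lip L U (e - k*y') (e - k*y) (by nlinarith)).1
    rw [← hy, ← hy'] at h1
    linarith
  · exact heq
  · have h1 := (clamp_mono_lip L U (e - k*y) (e - k*y') (by nlinarith)).1
    rw [← hy, ← hy'] at h1
    linarith

/-- in the symmetric VWAP setting with `f(s) = 1 − αs` (so that
`f̄ᵢ(s) = 1 − (α/2)∑ⱼ sⱼ`), for any fixed prices `0 ≤ q < q̄ ≤ 1` with `h < a·q̄`, the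
unique Nash equilibrium of (P2) is symmetric, with every bank liquidating
`s^VWAP(q,q̄) = max((h − aq)/(q̄ − q), min(2r/(α(1+r)(n+1)), h/q̄))`. -/
theorem symmetric_vwap_equilibrium
    (n : ℕ) (hn : 2 ≤ n) (a h r α : ℝ)
    (ha : 0 < a) (hh : 0 < h)
    (hr : r ∈ Set.Ioo (0 : ℝ) (1/3))
    (hα : α ∈ Set.Ioo (2*r / ((1+r) * ((n : ℝ)+1) * a)) (1 / (2*(n : ℝ)*a)))
    (q qb : ℝ) (hq : 0 ≤ q) (hlt : q < qb) (hqb : qb ≤ 1)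
    (hsolv : h < a * qb)
    (fbar : Fin n → (Fin n → ℝ) → ℝ)
    (hfbar : fbar = fun _ s => 1 - (α/2) * ∑ j, s j)
    (sv : ℝ)
    (hsv : sv = max ((h - a*q) / (qb - q))
        (min (2*r / (α*(1+r)*((n : ℝ)+1))) (h/qb))) :
    (memD n (fun _ => a) (fun _ => sv) ∧
      NashP2 n (fun _ => a) (fun _ => h) r q (fun _ => qb) fbar (fun _ => sv)) ∧
    ∀ s : Fin n → ℝ, memD n (fun _ => a) s →
      NashP2 n (fun _ => a) (fun _ => h) r q (fun _ => qb) fbar s →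
      s = fun _ => sv := by
  -- basic positivity
  obtain ⟨hr0, hr3⟩ := hr
  have hr1 : (0:ℝ) < 1 + r := by linarith
  have hn1 : (0:ℝ) < (n:ℝ) + 1 := by positivity
  have hn2 : (2:ℝ) ≤ (n:ℝ) := by exact_mod_cast hn
  have hα0 : 0 < α := lt_trans (by positivity) hα.1
  have hqb0 : 0 < qb := lt_of_le_of_lt hq hlt
  set U : ℝ := h / qb with hU
  set l : ℝ := (h - a*q) / (qb - q) with hl
  set L : ℝ := max 0 l with hLdef
  have hU0 : 0 < U := by positivity
  have hUa : U < a := (div_lt_iff₀ hqb0).2 (by linarith)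
  have hlU : l ≤ U := by
    rw [hl, hU, div_le_div_iff₀ (by linarith) hqb0]
    nlinarith [mul_le_mul_of_nonneg_right hsolv.le hq]
  have hLU : L ≤ U := max_le hU0.le hlU
  have hL0 : 0 ≤ L := le_max_left _ _
  set m : ℝ := 2*r / (α*(1+r)*((n:ℝ)+1)) with hm
  have hm0 : 0 < m := by positivity
  set c0 : ℝ := r / ((1+r)*α) with hc0
  have hc0m : c0 = ((n:ℝ)+1)*m/2 := by
    rw [hc0, hm]; field_simp
  -- sv is the symmetric clamp fixed point
  have hsvLU : sv = max L (min (c0 - ((n:ℝ)-1)*sv/2) U) := by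
    rw [hsv]
    rcases le_total m U with hmU | hUm
    · rw [min_eq_left hmU]
      rcases le_total l m with h1 | h1
      · rw [max_eq_right h1]
        have hmm : c0 - ((n:ℝ)-1)*m/2 = m := by rw [hc0m]; ring
        rw [hmm, min_eq_left hmU, max_eq_right (max_le hm0.le h1)]
      · rw [max_eq_left h1]
        have hinner : c0 - ((n:ℝ)-1)*l/2 ≤ l := by
          rw [hc0m]; nlinarith
        rw [min_eq_left (le_trans hinner hlU),
          max_eq_left (le_trans hinner (le_max_right 0 l)),
          max_eq_right (le_trans hm0.le h1)]
    · rw [min_eq_right hUm, max_eq_right hlU]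
      have hinner : U ≤ c0 - ((n:ℝ)-1)*U/2 := by
        rw [hc0m]; nlinarith
      rw [min_eq_right hinner, max_eq_right hLU]
  have hsvIcc : sv ∈ Set.Icc L U := by
    rw [hsvLU]; exact ⟨le_max_left _ _, max_le hLU (min_le_right _ _)⟩
  -- feasibility is the interval [L,U]
  have hfeas : ∀ (i : Fin n) (x : ℝ),
      feasP2 n (fun _ => a) (fun _ => h) q (fun _ => qb) i x ↔ x ∈ Set.Icc L U := by
    intro i x
    unfold feasP2
    simp only [Set.mem_Icc]
    constructor
    · rintro ⟨⟨h1, _⟩, h3, h4⟩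
      exact ⟨max_le h1 h4, h3⟩
    · rintro ⟨h1, h2⟩
      exact ⟨⟨le_trans (le_max_left 0 l) h1, le_trans h2 hUa.le⟩, h2,
        le_trans (le_max_right 0 l) h1⟩
  -- objective as a quadratic in own action
  set C : ℝ := (1+r)*α/2 with hC
  have hCpos : 0 < C := by positivity
  have hobj : ∀ (s : Fin n → ℝ) (i : Fin n) (x : ℝ),
      obj n r (fun _ => h) fbar i (Function.update s i x)
        = C*x^2 + ((1+r)*(α/2)*(∑ j ∈ Finset.univ \ {i}, s j) - r)*x + r*h := by
    intro s i x
    unfold obj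
    rw [hfbar]
    simp only [Function.update_self]
    rw [Finset.sum_update_of_mem (Finset.mem_univ i)]
    ring
  -- vertex formula
  have hvert : ∀ T : ℝ, -((1+r)*(α/2)*T - r)/(2*C) = c0 - T/2 := by
    intro T
    rw [hC, hc0]
    field_simp
    ring
  constructor
  · constructor
    · -- memD
      intro i
      exact ⟨le_trans hL0 hsvIcc.1, le_trans hsvIcc.2 hUa.le⟩
    · -- Nash at the symmetric profile
      intro i
      constructor
      · intro _
        have hT : (∑ j ∈ Finset.univ \ {i}, (fun _ => sv) j) = ((n:ℝ)-1)*sv := by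
          simp only [Finset.sum_const, Finset.card_univ_diff, Finset.card_singleton,
            Finset.card_univ, Fintype.card_fin, nsmul_eq_mul]
          rw [Nat.cast_sub (by omega : 1 ≤ n)]
          norm_num
        have hupd : Function.update (fun _ => sv) i sv = fun _ => sv :=
          funext fun j => by simp [Function.update_apply]
        refine ⟨(hfeas i sv).2 hsvIcc, ?_⟩
        intro x hx
        have hx' := (hfeas i x).1 hx
        have key := (quad_min_at_clamp C ((1+r)*(α/2)*(((n:ℝ)-1)*sv) - r) L U hCpos hLU).2
        rw [hvert (((n:ℝ)-1)*sv)] at key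
        rw [← hsvLU] at key
        have e1 := hobj (fun _ => sv) i x
        rw [hT] at e1
        have e2 := hobj (fun _ => sv) i sv
        rw [hT, hupd] at e2
        rw [e1, e2]
        have := key x hx'
        linarith
      · intro hc
        exact absurd hc (not_lt.2 hsolv.le)
  · -- uniqueness
    intro s hmem hnash
    set S : ℝ := ∑ j, s j with hS
    have hfix : ∀ i, s i = max L (min ((c0 - S/2) + (s i)/2) U) := by
      intro i
      obtain ⟨hfeasi, hmini⟩ := (hnash i).1 hsolv.le
      have hfI := (hfeas i (s i)).1 hfeasi
      set T : ℝ := ∑ j ∈ Finset.univ \ {i}, s j with hT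
      have hTS : T = S - s i := by
        rw [hT, hS, Finset.sum_sdiff_eq_sub (Finset.subset_univ {i}), Finset.sum_singleton]
      have hmin' : ∀ x ∈ Set.Icc L U,
          C*(s i)^2 + ((1+r)*(α/2)*T - r)*(s i) ≤ C*x^2 + ((1+r)*(α/2)*T - r)*x := by
        intro x hx
        have hle := hmini x ((hfeas i x).2 hx)
        rw [hobj] at hle
        have e2 := hobj s i (s i)
        rw [Function.update_eq_self] at e2
        rw [e2] at hle
        linarith
      have harg := quad_argmin C ((1+r)*(α/2)*T - r) L U (s i) hCpos hLU hfI hmin'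
      rw [hvert, hTS] at harg
      rw [show c0 - (S - s i)/2 = (c0 - S/2) + (s i)/2 from by ring] at harg
      exact harg
    have hall : ∀ i j : Fin n, s i = s j := fun i j =>
      fp_half L U (c0 - S/2) (s i) (s j) (hfix i) (hfix j)
    funext j
    show s j = sv
    have hSn : S = (n:ℝ) * s j := by
      rw [hS]
      rw [Finset.sum_congr rfl (fun k _ => hall k j)]
      simp [Finset.sum_const, Finset.card_univ]
    have hfj := hfix j
    rw [show (c0 - S/2) + (s j)/2 = c0 - (((n:ℝ)-1)/2)*(s j) from by rw [hSn]; ring] at hfj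
    have hsv' := hsvLU
    rw [show c0 - ((n:ℝ)-1)*sv/2 = c0 - (((n:ℝ)-1)/2)*sv from by ring] at hsv'
    exact fp_dec L U c0 (((n:ℝ)-1)/2) (s j) sv (by linarith) hfj hsv'
end
end

section
/- In the symmetric LOB setting, for any fixed prices (q, q̄) with 0 ≤ q < q̄ ≤ 1 and h < a·q̄, the unique Nash equilibrium of problem (P2) (with all banks facing the same price q̄) is symmetric, s_i = s^LOB(q,q̄) for all i, where s^LOB(q,q̄) = max( (h − a q)/(q̄ − q) , min( r/(α(1+r)n) , h/q̄ ) ). -/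
noncomputable section

/-- Limit order book based price: all banks submit orders at the same rate, so when bank `i`
has sold `u` units the total volume sold is `∑ⱼ min(sⱼ, u)`.  The average price obtained by
bank `i` is `(1/sᵢ) ∫₀^{sᵢ} f(∑ⱼ min(sⱼ,u)) du`, which coincides with the order-statistics
formula of the LOB pricing scheme. -/
def lob (n : ℕ) (f : ℝ → ℝ) : Fin n → (Fin n → ℝ) → ℝ := fun i s =>
  if s i = 0 then 1 else (∫ u in (0:ℝ)..(s i), f (∑ j, min (s j) u)) / s i

lemma contG (n : ℕ) (s : Fin n → ℝ) (i : Fin n) :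
    Continuous (fun u : ℝ => u + ∑ j ∈ Finset.univ.erase i, min (s j) u) := by
  apply continuous_id.add
  exact continuous_finset_sum _ (fun j _ => continuous_const.min continuous_id)

lemma monoG (n : ℕ) (s : Fin n → ℝ) (i : Fin n) :
    Monotone (fun u : ℝ => u + ∑ j ∈ Finset.univ.erase i, min (s j) u) := by
  intro u v huv
  exact add_le_add huv (Finset.sum_le_sum fun j _ => min_le_min le_rfl huv)

lemma lob_mul (n : ℕ) (f : ℝ → ℝ) (i : Fin n) (s : Fin n → ℝ) :
    s i * lob n f i s = ∫ u in (0:ℝ)..(s i), f (∑ j, min (s j) u) := by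
  unfold lob
  by_cases h : s i = 0
  · simp [h]
  · rw [if_neg h]; field_simp [h]

lemma obj_formula (n : ℕ) (r α hh : ℝ) (i : Fin n) (s : Fin n → ℝ) (x : ℝ) (hx : 0 ≤ x) :
    obj n r (fun _ => hh) (lob n (fun t => 1 - α * t)) i (Function.update s i x)
      = r*hh - r*x + (1+r)*α *
        ∫ u in (0:ℝ)..x, (u + ∑ j ∈ Finset.univ.erase i, min (s j) u) := by
  set t := Function.update s i x with ht
  have hti : t i = x := Function.update_self i x s
  have hcont : ∀ (j : Fin n), Continuous (fun u : ℝ => min (t j) u) :=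
    fun j => continuous_const.min continuous_id
  have key : (∫ u in (0:ℝ)..x, (fun y => 1 - α * y) (∑ j, min (t j) u))
      = x - α * ∫ u in (0:ℝ)..x, (u + ∑ j ∈ Finset.univ.erase i, min (s j) u) := by
    have hsum : Continuous (fun u : ℝ => ∑ j, min (t j) u) :=
      continuous_finset_sum _ (fun j _ => hcont j)
    rw [intervalIntegral.integral_sub (f := fun _ => (1:ℝ)) (g := fun u => α * ∑ j, min (t j) u) ((continuous_const).intervalIntegrable 0 x)
        ((continuous_const.mul hsum).intervalIntegrable 0 x)]
    rw [intervalIntegral.integral_const_mul]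
    have h2 : (∫ u in (0:ℝ)..x, ∑ j, min (t j) u)
        = ∫ u in (0:ℝ)..x, (u + ∑ j ∈ Finset.univ.erase i, min (s j) u) := by
      apply intervalIntegral.integral_congr
      intro u hu
      rw [Set.uIcc_of_le hx] at hu
      show ∑ j, min (t j) u = u + ∑ j ∈ Finset.univ.erase i, min (s j) u
      rw [← Finset.add_sum_erase Finset.univ (fun j => min (t j) u) (Finset.mem_univ i)]
      have e1 : min (t i) u = u := by rw [hti]; exact min_eq_right hu.2
      rw [e1]
      congr 1
      apply Finset.sum_congr rfl
      intro j hj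
      rw [ht, Function.update_of_ne (Finset.ne_of_mem_erase hj)]
    rw [h2]
    simp
  unfold obj
  rw [hti]
  have hlobmul : x * lob n (fun y => 1 - α * y) i t =
      ∫ u in (0:ℝ)..x, (fun y => 1 - α * y) (∑ j, min (t j) u) := by
    rw [← hti]; exact lob_mul n _ i t
  have expand : x * (1 - lob n (fun y => 1 - α * y) i t)
        + r * ((fun _ => hh) i - x * lob n (fun y => 1 - α * y) i t)
      = x + r * hh - (1+r) * (x * lob n (fun y => 1 - α * y) i t) := by ring
  rw [expand, hlobmul, key]
  ring

lemma obj_diff (n : ℕ) (r α hh : ℝ) (i : Fin n) (s : Fin n → ℝ) (x y : ℝ)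
    (hx : 0 ≤ x) (hy : 0 ≤ y) :
    obj n r (fun _ => hh) (lob n (fun t => 1 - α * t)) i (Function.update s i y)
      - obj n r (fun _ => hh) (lob n (fun t => 1 - α * t)) i (Function.update s i x)
    = -(r*(y-x)) + (1+r)*α * ∫ u in x..y, (u + ∑ j ∈ Finset.univ.erase i, min (s j) u) := by
  rw [obj_formula n r α hh i s x hx, obj_formula n r α hh i s y hy,
     ← intervalIntegral.integral_interval_sub_left ((contG n s i).intervalIntegrable 0 y)
       ((contG n s i).intervalIntegrable 0 x)]
  ring

lemma int_lb (G : ℝ → ℝ) (hm : Monotone G) (hc : Continuous G) {x y : ℝ} (hxy : x ≤ y) :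
    (y - x) * G x ≤ ∫ u in x..y, G u := by
  calc (y-x) * G x = ∫ _u in x..y, G x := by
        rw [intervalIntegral.integral_const, smul_eq_mul]
    _ ≤ ∫ u in x..y, G u :=
        intervalIntegral.integral_mono_on hxy intervalIntegrable_const
          (hc.intervalIntegrable x y) (fun u hu => hm hu.1)

lemma int_ub (G : ℝ → ℝ) (hm : Monotone G) (hc : Continuous G) {x y : ℝ} (hxy : x ≤ y) :
    (∫ u in x..y, G u) ≤ (y - x) * G y := by
  calc (∫ u in x..y, G u) ≤ ∫ _u in x..y, G y :=
        intervalIntegral.integral_mono_on hxy (hc.intervalIntegrable x y)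
          intervalIntegrable_const (fun u hu => hm hu.2)
    _ = (y - x) * G y := by rw [intervalIntegral.integral_const, smul_eq_mul]

/-- in the symmetric LOB setting with order book density `f(s) = 1 − αs`,
for any fixed prices `0 ≤ q < q̄ ≤ 1` with `h < a·q̄`, the unique Nash equilibrium of (P2)
is symmetric, with every bank liquidating
`s^LOB(q,q̄) = max((h − aq)/(q̄ − q), min(r/(α(1+r)n), h/q̄))`. -/
theorem symmetric_lob_equilibrium
    (n : ℕ) (hn : 2 ≤ n) (a h r α : ℝ)
    (ha : 0 < a) (hh : 0 < h)
    (hr : r ∈ Set.Ioo (0 : ℝ) (1/3))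
    (hα : α ∈ Set.Ioo (2*r / ((1+r) * ((n : ℝ)+1) * a)) (1 / (2*(n : ℝ)*a)))
    (q qb : ℝ) (hq : 0 ≤ q) (hlt : q < qb) (hqb : qb ≤ 1)
    (hsolv : h < a * qb)
    (sv : ℝ)
    (hsv : sv = max ((h - a*q) / (qb - q))
        (min (r / (α*(1+r)*(n : ℝ))) (h/qb))) :
    (memD n (fun _ => a) (fun _ => sv) ∧
      NashP2 n (fun _ => a) (fun _ => h) r q (fun _ => qb)
        (lob n (fun x => 1 - α * x)) (fun _ => sv)) ∧
    ∀ s : Fin n → ℝ, memD n (fun _ => a) s →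
      NashP2 n (fun _ => a) (fun _ => h) r q (fun _ => qb)
        (lob n (fun x => 1 - α * x)) s →
      s = fun _ => sv := by
  obtain ⟨hr0, hr3⟩ := hr
  obtain ⟨hα1, hα2⟩ := hα
  have hn1 : 1 ≤ n := by omega
  have hnR : (2:ℝ) ≤ (n:ℝ) := by exact_mod_cast hn
  have hnpos : (0:ℝ) < (n:ℝ) := by linarith
  have hr1 : (0:ℝ) < 1 + r := by linarith
  have hα0 : 0 < α := lt_trans (by positivity) hα1
  have hqb0 : 0 < qb := lt_of_le_of_lt hq hlt
  have hqbq : 0 < qb - q := by linarith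
  obtain ⟨c, hcdef⟩ : ∃ x : ℝ, x = (1+r)*α := ⟨_, rfl⟩
  have hc : 0 < c := by rw [hcdef]; exact mul_pos hr1 hα0
  obtain ⟨xstar, hxsdef⟩ : ∃ x : ℝ, x = r / (α*(1+r)*(n:ℝ)) := ⟨_, rfl⟩
  have hxs0 : 0 < xstar := by rw [hxsdef]; positivity
  have hcx : c * (n:ℝ) * xstar = r := by
    rw [hcdef, hxsdef]; field_simp
  obtain ⟨L, hLdef⟩ : ∃ x : ℝ, x = (h - a*q) / (qb - q) := ⟨_, rfl⟩
  obtain ⟨U, hUdef⟩ : ∃ x : ℝ, x = h / qb := ⟨_, rfl⟩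
  rw [← hxsdef, ← hLdef, ← hUdef] at hsv
  have hU0 : 0 < U := by rw [hUdef]; positivity
  have hUa : U < a := by rw [hUdef, div_lt_iff₀ hqb0]; linarith
  have hLU : L ≤ U := by
    rw [hLdef, hUdef, div_le_div_iff₀ hqbq hqb0]
    linarith [mul_le_mul_of_nonneg_left hsolv.le hq]
  have hsvL : L ≤ sv := hsv ▸ le_max_left _ _
  have hsvU : sv ≤ U := hsv ▸ max_le hLU (min_le_right _ _)
  have hsv0 : 0 < sv := hsv ▸ lt_max_of_lt_right (lt_min hxs0 hU0)
  have hsva : sv < a := lt_of_le_of_lt hsvU hUa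
  have key1 : sv < U → r ≤ c * (n:ℝ) * sv := by
    intro hsvU'
    rcases le_total xstar U with hcase | hcase
    · have hxsv : xstar ≤ sv := by
        rw [hsv, min_eq_left hcase]; exact le_max_right _ _
      linarith [mul_le_mul_of_nonneg_left hxsv (mul_nonneg hc.le hnpos.le)]
    · have : sv = U := by rw [hsv, min_eq_right hcase, max_eq_right hLU]
      exact absurd (this ▸ hsvU') (lt_irrefl U)
  have key2 : L < sv → c * (n:ℝ) * sv ≤ r := by
    intro hLsv
    have hsvx : sv ≤ xstar := by
      rcases max_choice L (min xstar U) with hmc | hmc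
      · rw [hsv, hmc] at hLsv; exact absurd hLsv (lt_irrefl L)
      · rw [hsv, hmc]; exact min_le_left _ _
    linarith [mul_le_mul_of_nonneg_left hsvx (mul_nonneg hc.le hnpos.le)]
  have hsolv' : h ≤ a * qb := hsolv.le
  have hcard : ∀ i : Fin n, (((Finset.univ.erase i).card : ℕ) : ℝ) = (n:ℝ) - 1 := by
    intro i
    rw [Finset.card_erase_of_mem (Finset.mem_univ i), Finset.card_univ, Fintype.card_fin,
      Nat.cast_sub hn1, Nat.cast_one]
  -- feasibility interface
  have hfeas_of : ∀ (i : Fin n) (y : ℝ), 0 ≤ y → y ≤ a → y ≤ U → L ≤ y →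
      feasP2 n (fun _ => a) (fun _ => h) q (fun _ => qb) i y := by
    intro i y h1 h2 h3 h4
    rw [hUdef] at h3
    rw [hLdef] at h4
    exact ⟨⟨h1, h2⟩, h3, h4⟩
  have hfeas_to : ∀ (i : Fin n) (y : ℝ),
      feasP2 n (fun _ => a) (fun _ => h) q (fun _ => qb) i y →
      0 ≤ y ∧ y ≤ a ∧ y ≤ U ∧ L ≤ y := by
    intro i y hf
    refine ⟨hf.1.1, hf.1.2, ?_, ?_⟩
    · rw [hUdef]; exact hf.2.1
    · rw [hLdef]; exact hf.2.2
  constructor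
  · constructor
    · intro i; exact ⟨hsv0.le, hsva.le⟩
    · intro i
      refine ⟨fun _ => ⟨hfeas_of i sv hsv0.le hsva.le hsvU hsvL, ?_⟩,
        fun hcon => absurd hcon (not_lt.2 hsolv')⟩
      intro x hx
      obtain ⟨hx0, hxa, hxU, hxL⟩ := hfeas_to i x hx
      have hds := obj_diff n r α h i (fun _ => sv) sv x hsv0.le hx0
      have hupd : Function.update (fun _ : Fin n => sv) i sv = (fun _ : Fin n => sv) := by
        funext j; by_cases hji : j = i <;> simp [hji]
      rw [hupd, ← hcdef] at hds
      have hGeq : (fun u : ℝ => u + ∑ j ∈ Finset.univ.erase i, min ((fun _ : Fin n => sv) j) u)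
          = fun u : ℝ => u + ((n:ℝ)-1) * min sv u := by
        funext u
        simp only
        rw [Finset.sum_const, nsmul_eq_mul, hcard i]
      have hGmono : Monotone (fun u : ℝ => u + ((n:ℝ)-1) * min sv u) := by
        intro u v huv
        have h2 : ((n:ℝ)-1) * min sv u ≤ ((n:ℝ)-1) * min sv v :=
          mul_le_mul_of_nonneg_left (min_le_min le_rfl huv) (by linarith)
        exact add_le_add huv h2
      have hGcont : Continuous (fun u : ℝ => u + ((n:ℝ)-1) * min sv u) :=
        continuous_id.add (continuous_const.mul (continuous_const.min continuous_id))
      rw [hGeq] at hds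
      have hgoal : 0 ≤ -(r*(x - sv)) + c * ∫ u in sv..x, (u + ((n:ℝ)-1) * min sv u) := by
        rcases le_or_gt x sv with hxs | hxs
        · rcases hxs.lt_or_eq with hxs' | hxs'
          · have hk2 := key2 (lt_of_le_of_lt hxL hxs')
            have hub := int_ub _ hGmono hGcont hxs
            simp only [min_self] at hub
            rw [intervalIntegral.integral_symm]
            have e1 := mul_le_mul_of_nonneg_left hub hc.le
            have e2 := mul_le_mul_of_nonneg_right hk2
              (show (0:ℝ) ≤ sv - x by linarith)
            linarith [e1, e2]
          · subst hxs'; simp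
        · have hk1 := key1 (lt_of_lt_of_le hxs hxU)
          have hlb := int_lb _ hGmono hGcont hxs.le
          simp only [min_self] at hlb
          have e1 := mul_le_mul_of_nonneg_left hlb hc.le
          have e2 := mul_le_mul_of_nonneg_right hk1
            (show (0:ℝ) ≤ x - sv by linarith)
          linarith [e1, e2]
      linarith [hds, hgoal]
  · -- uniqueness
    intro s hmem hne
    have hfeas : ∀ i, 0 ≤ s i ∧ s i ≤ a ∧ s i ≤ U ∧ L ≤ s i :=
      fun i => hfeas_to i (s i) ((hne i).1 hsolv').1
    have hopt : ∀ i x, feasP2 n (fun _ => a) (fun _ => h) q (fun _ => qb) i x →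
        obj n r (fun _ => h) (lob n (fun t => 1 - α * t)) i s
          ≤ obj n r (fun _ => h) (lob n (fun t => 1 - α * t)) i (Function.update s i x) :=
      fun i => ((hne i).1 hsolv').2
    have hs0 : ∀ i, 0 ≤ s i := fun i => (hfeas i).1
    have hsa : ∀ i, s i ≤ a := fun i => (hfeas i).2.1
    have hsU' : ∀ i, s i ≤ U := fun i => (hfeas i).2.2.1
    have hsL' : ∀ i, L ≤ s i := fun i => (hfeas i).2.2.2
    have step : ∀ (i : Fin n) (y : ℝ),
        feasP2 n (fun _ => a) (fun _ => h) q (fun _ => qb) i y → 0 ≤ y →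
        0 ≤ -(r*(y - s i)) + c * ∫ u in (s i)..y,
            (u + ∑ j ∈ Finset.univ.erase i, min (s j) u) := by
      intro i y hfy hy0
      have hds := obj_diff n r α h i s (s i) y (hs0 i) hy0
      rw [Function.update_eq_self i s, ← hcdef] at hds
      have hle := hopt i y hfy
      linarith
    haveI : Nonempty (Fin n) := ⟨⟨0, by omega⟩⟩
    obtain ⟨i0, hi0⟩ := Finite.exists_min s
    obtain ⟨j0, hj0⟩ := Finite.exists_max s
    -- all coordinates are equal
    have heq : s i0 = s j0 := by
      by_contra hne'
      have hmM : s i0 < s j0 := (hi0 j0).lt_of_ne hne'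
      obtain ⟨m, hm⟩ : ∃ x : ℝ, x = s i0 := ⟨_, rfl⟩
      obtain ⟨M, hM⟩ : ∃ x : ℝ, x = s j0 := ⟨_, rfl⟩
      have hi0' : ∀ j, m ≤ s j := fun j => hm.le.trans (hi0 j)
      have hj0' : ∀ j, s j ≤ M := fun j => (hj0 j).trans hM.ge
      have hm0 : 0 ≤ m := by rw [hm]; exact hs0 i0
      have hMa : M ≤ a := by rw [hM]; exact hsa j0
      have hMU : M ≤ U := by rw [hM]; exact hsU' j0
      have hLm : L ≤ m := by rw [hm]; exact hsL' i0
      have hmM' : m < M := by rw [hm, hM]; exact hmM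
      obtain ⟨y1, hy1def⟩ : ∃ x : ℝ, x = m + (M - m)/(4*(n:ℝ)) := ⟨_, rfl⟩
      obtain ⟨y2, hy2def⟩ : ∃ x : ℝ, x = m + (M - m)/2 := ⟨_, rfl⟩
      have hd0 : 0 < M - m := sub_pos.2 hmM'
      have hy10 : m < y1 := by
        have : 0 < (M - m)/(4*(n:ℝ)) := div_pos hd0 (by positivity)
        linarith [hy1def]
      have hy1M : y1 < M := by
        have : (M - m)/(4*(n:ℝ)) < M - m := by
          rw [div_lt_iff₀ (by positivity)]
          linarith [mul_pos hd0 (by linarith : (0:ℝ) < 4*(n:ℝ)-1)]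
        linarith [hy1def]
      have hy20 : m < y2 := by rw [hy2def]; linarith
      have hy2M : y2 < M := by rw [hy2def]; linarith
      -- i0 side with y1
      have hA : r ≤ c * ((n:ℝ) * y1) := by
        have hf1 := hfeas_of i0 y1 (le_trans hm0 hy10.le)
          (le_trans hy1M.le hMa) (le_trans hy1M.le hMU)
          (le_trans hLm hy10.le)
        have h1 := step i0 y1 hf1 (le_trans hm0 hy10.le)
        rw [← hm] at h1
        have hub := int_ub _ (monoG n s i0) (contG n s i0) hy10.le
        have hGub : y1 + ∑ j ∈ Finset.univ.erase i0, min (s j) y1 ≤ (n:ℝ) * y1 := by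
          have hsum : ∑ j ∈ Finset.univ.erase i0, min (s j) y1
              ≤ ((n:ℝ) - 1) * y1 := by
            calc ∑ j ∈ Finset.univ.erase i0, min (s j) y1
                ≤ ∑ _j ∈ Finset.univ.erase i0, y1 :=
                  Finset.sum_le_sum fun j _ => min_le_right _ _
              _ = ((n:ℝ) - 1) * y1 := by
                  rw [Finset.sum_const, nsmul_eq_mul, hcard i0]
          linarith
        have e1 := mul_le_mul_of_nonneg_left hub hc.le
        have e2 := mul_le_mul_of_nonneg_left
          (mul_le_mul_of_nonneg_left hGub (by linarith : (0:ℝ) ≤ y1 - m)) hc.le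
        have hfin : r*(y1 - m) ≤ c*((y1-m)*((n:ℝ)*y1)) := by linarith [h1, e1, e2]
        by_contra hcon
        push_neg at hcon
        have := mul_lt_mul_of_pos_right hcon (sub_pos.2 hy10)
        linarith
      -- j0 side with y2
      have hB : c * (y2 + ((n:ℝ)-1) * m) ≤ r := by
        have hf2 := hfeas_of j0 y2 (le_trans hm0 hy20.le)
          (le_trans hy2M.le hMa) (le_trans hy2M.le hMU)
          (le_trans hLm hy20.le)
        have h2 := step j0 y2 hf2 (le_trans hm0 hy20.le)
        rw [← hM] at h2
        rw [intervalIntegral.integral_symm] at h2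
        have hlb := int_lb _ (monoG n s j0) (contG n s j0) hy2M.le
        have hGlb : y2 + ((n:ℝ)-1) * m ≤ y2 + ∑ j ∈ Finset.univ.erase j0, min (s j) y2 := by
          have hsum : ((n:ℝ) - 1) * m ≤ ∑ j ∈ Finset.univ.erase j0, min (s j) y2 := by
            calc ((n:ℝ) - 1) * m = ∑ _j ∈ Finset.univ.erase j0, m := by
                  rw [Finset.sum_const, nsmul_eq_mul, hcard j0]
              _ ≤ ∑ j ∈ Finset.univ.erase j0, min (s j) y2 :=
                  Finset.sum_le_sum fun j _ => le_min (hi0' j) hy20.le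
          linarith
        have e1 := mul_le_mul_of_nonneg_left hlb hc.le
        have e2 := mul_le_mul_of_nonneg_left
          (mul_le_mul_of_nonneg_left hGlb (by linarith : (0:ℝ) ≤ M - y2)) hc.le
        have hfin : c*((M-y2)*(y2 + ((n:ℝ)-1)*m)) ≤ r*(M-y2) := by linarith [h2, e1, e2]
        by_contra hcon
        push_neg at hcon
        have := mul_lt_mul_of_pos_right hcon (sub_pos.2 hy2M)
        linarith
      -- contradiction
      have hy1eq : (n:ℝ) * y1 = (n:ℝ) * m + (M - m)/4 := by
        rw [hy1def]
        field_simp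
      rw [hy1eq] at hA
      rw [hy2def] at hB
      linarith [mul_pos hc hd0]
    have hconst : ∀ k, s k = s i0 := fun k => le_antisymm (heq ▸ hj0 k) (hi0 k)
    -- the common value equals sv
    have hcv : s i0 = sv := by
      rcases lt_trichotomy (s i0) sv with clt | ceq | cgt
      · exfalso
        obtain ⟨y, hydef⟩ : ∃ x : ℝ, x = (s i0 + sv)/2 := ⟨_, rfl⟩
        have hy1 : s i0 < y := by rw [hydef]; linarith
        have hy2 : y < sv := by rw [hydef]; linarith
        have hf := hfeas_of i0 y (le_trans (hs0 i0) hy1.le)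
          (le_trans hy2.le hsva.le) (le_trans hy2.le hsvU)
          (le_trans (hsL' i0) hy1.le)
        have h1 := step i0 y hf (le_trans (hs0 i0) hy1.le)
        have hub := int_ub _ (monoG n s i0) (contG n s i0) hy1.le
        have hGub : y + ∑ j ∈ Finset.univ.erase i0, min (s j) y ≤ (n:ℝ) * y := by
          have hsum : ∑ j ∈ Finset.univ.erase i0, min (s j) y ≤ ((n:ℝ) - 1) * y := by
            calc ∑ j ∈ Finset.univ.erase i0, min (s j) y
                ≤ ∑ _j ∈ Finset.univ.erase i0, y :=
                  Finset.sum_le_sum fun j _ => min_le_right _ _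
              _ = ((n:ℝ) - 1) * y := by rw [Finset.sum_const, nsmul_eq_mul, hcard i0]
          linarith
        have hk2 := key2 (lt_of_le_of_lt (hsL' i0) clt)
        have e1 := mul_le_mul_of_nonneg_left hub hc.le
        have e2 := mul_le_mul_of_nonneg_left
          (mul_le_mul_of_nonneg_left hGub (by linarith : (0:ℝ) ≤ y - s i0)) hc.le
        have hfin : r*(y - s i0) ≤ c*((y - s i0)*((n:ℝ)*y)) := by linarith [h1, e1, e2]
        have hcny : c*((n:ℝ)*y) < r := by
          have := mul_lt_mul_of_pos_left (mul_lt_mul_of_pos_left hy2 hnpos) hc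
          linarith
        have := mul_lt_mul_of_pos_right hcny (sub_pos.2 hy1)
        linarith
      · exact ceq
      · exfalso
        obtain ⟨y, hydef⟩ : ∃ x : ℝ, x = (sv + s i0)/2 := ⟨_, rfl⟩
        have hy1 : sv < y := by rw [hydef]; linarith
        have hy2 : y < s i0 := by rw [hydef]; linarith
        have hf := hfeas_of i0 y (le_trans hsv0.le hy1.le)
          (le_trans hy2.le (hsa i0)) (le_trans hy2.le (hsU' i0))
          (le_trans hsvL hy1.le)
        have h1 := step i0 y hf (le_trans hsv0.le hy1.le)
        rw [intervalIntegral.integral_symm] at h1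
        have hlb := int_lb _ (monoG n s i0) (contG n s i0) hy2.le
        have hGlb : (n:ℝ) * y ≤ y + ∑ j ∈ Finset.univ.erase i0, min (s j) y := by
          have hsum : ((n:ℝ) - 1) * y ≤ ∑ j ∈ Finset.univ.erase i0, min (s j) y := by
            calc ((n:ℝ) - 1) * y = ∑ _j ∈ Finset.univ.erase i0, y := by
                  rw [Finset.sum_const, nsmul_eq_mul, hcard i0]
              _ ≤ ∑ j ∈ Finset.univ.erase i0, min (s j) y :=
                  Finset.sum_le_sum fun j _ =>
                    le_min (le_trans hy2.le ((hconst j) ▸ le_rfl)) le_rfl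
          linarith
        have hk1 := key1 (lt_of_lt_of_le cgt (hsU' i0))
        have e1 := mul_le_mul_of_nonneg_left hlb hc.le
        have e2 := mul_le_mul_of_nonneg_left
          (mul_le_mul_of_nonneg_left hGlb (by linarith : (0:ℝ) ≤ s i0 - y)) hc.le
        have hfin : c*((s i0 - y)*((n:ℝ)*y)) ≤ r*(s i0 - y) := by linarith [h1, e1, e2]
        have hcny : r < c*((n:ℝ)*y) := by
          have := mul_lt_mul_of_pos_left (mul_lt_mul_of_pos_left hy1 hnpos) hc
          linarith
        have := mul_lt_mul_of_pos_right hcny (sub_pos.2 hy2)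
        linarith
    funext k
    rw [hconst k, hcv]
end
end

section
/- Consider n = 2 banks with repo rate r = 0, identical holdings a > 0 and identical shortfall h with 0.5·a < h < 0.7·a; let f̄_1(s) = f̄_2(s) = 1 − (s_1+s_2)/(4a) and g(s) = 0.7 − s/(4a). Then there exist (at least) two distinct clearing solutions: (i) s** = (0,0) with prices (q**, q̄_1**, q̄_2**) = (0.7, 1, 1), and (ii) s** = (a,a) with prices (q**, q̄_1**, q̄_2**) = (0.2, 0.5, 0.5). In particular, the clearing solution is not unique. -/
noncomputable section

/-- Example 2.5: with two identical banks, `r = 0`, `0.5a < h < 0.7a`,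
`f̄₁(s) = f̄₂(s) = 1 − (s₁+s₂)/(4a)` and `g(x) = 0.7 − x/(4a)`, both `s** = (0,0)` with
prices `(0.7, 1, 1)` and `s** = (a,a)` with prices `(0.2, 0.5, 0.5)` are clearing
solutions; in particular the clearing solution is not unique. -/
theorem two_bank_nonuniqueness_counterexample
    (a h : ℝ) (ha : 0 < a) (hh1 : 0.5 * a < h) (hh2 : h < 0.7 * a)
    (fbar : Fin 2 → (Fin 2 → ℝ) → ℝ)
    (hfbar : fbar = fun _ s => 1 - (s 0 + s 1) / (4*a))
    (g : ℝ → ℝ) (hg : g = fun x => 0.7 - x / (4*a)) :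
    (memD 2 (fun _ => a) (fun _ => 0) ∧
      NashP2 2 (fun _ => a) (fun _ => h) 0 0.7 (fun _ => 1) fbar (fun _ => 0) ∧
      g (∑ i : Fin 2, (0 : ℝ)) = 0.7 ∧
      (∀ i : Fin 2, fbar i (fun _ => 0) = 1)) ∧
    (memD 2 (fun _ => a) (fun _ => a) ∧
      NashP2 2 (fun _ => a) (fun _ => h) 0 0.2 (fun _ => 0.5) fbar (fun _ => a) ∧
      g (∑ i : Fin 2, a) = 0.2 ∧
      (∀ i : Fin 2, fbar i (fun _ => a) = 0.5)) ∧
    (fun _ : Fin 2 => (0 : ℝ)) ≠ (fun _ : Fin 2 => a) := by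
  subst hfbar hg
  have ha4 : (0:ℝ) < 4*a := by linarith
  refine ⟨⟨?_, ?_, ?_, ?_⟩, ⟨?_, ?_, ?_, ?_⟩, ?_⟩
  · intro i; exact ⟨le_refl 0, ha.le⟩
  · intro i
    constructor
    · intro _
      have hfeas0 : feasP2 2 (fun _ => a) (fun _ => h) 0.7 (fun _ => 1) i 0 := by
        refine ⟨⟨le_refl 0, ha.le⟩, ?_, ?_⟩
        · simp only; rw [div_one]; linarith
        · simp only
          rw [div_le_iff₀ (by norm_num : (0:ℝ) < 1 - 0.7)]
          linarith
      refine ⟨hfeas0, ?_⟩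
      intro x hx
      obtain ⟨⟨hx0, hxa⟩, _, _⟩ := hx
      unfold obj
      have hsum : (Function.update (fun _ : Fin 2 => (0:ℝ)) i x) 0 +
          (Function.update (fun _ : Fin 2 => (0:ℝ)) i x) 1 = x := by
        fin_cases i <;> simp [Function.update]
      simp only [Function.update_self, hsum, mul_zero, zero_mul, add_zero]
      have hd : 0 ≤ x / (4*a) := div_nonneg hx0 ha4.le
      nlinarith
    · intro hlt; simp only at hlt; linarith
  · simp only [Fin.sum_univ_two]; norm_num
  · intro i; norm_num
  · intro i; exact ⟨ha.le, le_refl a⟩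
  · intro i
    constructor
    · intro hle; simp only at hle; linarith
    · intro _; rfl
  · simp only [Fin.sum_univ_two]; field_simp; ring
  · intro i; simp only; field_simp; ring
  · intro heq
    have := congrFun heq 0
    linarith
end
end
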